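/- Characterization of Pareto-efficient contracts: let (s*,p*) be an optimal contract. An implementable contract (s,p) is Pareto-efficient if and only if s_t = s*_t for all t, 0 ≤ p_0 ≤ δ·(π(s*_1) − π(0))/(1−δ), and p_t = (w(s*_{t−1}) − w(s*_t))/(1−δ) for every t ≥ 1. -/

import Mathlib

open Set Filter

/-- Principal's continuation value `Π_t(s,p) = Σ_{τ=t}^∞ δ^{τ−t}(π(s_τ) − p_τ)`. -/
noncomputable def PiVal (δ : ℝ) (π : ℝ → ℝ) (s p : ℕ → ℝ) (t : ℕ) : ℝ :=
  ∑' k : ℕ, δ ^ k * (π (s (t + k)) - p (t + k))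

/-- Expert's continuation value `W_t(s,p) = Σ_{τ=t}^∞ δ^{τ−t}(w(s_τ) + p_τ)`. -/
noncomputable def WVal (δ : ℝ) (w : ℝ → ℝ) (s p : ℕ → ℝ) (t : ℕ) : ℝ :=
  ∑' k : ℕ, δ ^ k * (w (s (t + k)) + p (t + k))

/-- A contract: `s` takes values in `[0,1]`, `s 0 = 0`, and `t ↦ δ^t·p_t` is summable. -/
def IsContract (δ : ℝ) (s p : ℕ → ℝ) : Prop :=
  (∀ t, s t ∈ Set.Icc (0 : ℝ) 1) ∧ s 0 = 0 ∧ Summable fun t => δ ^ t * p t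

/-- Implementability: feasibility (monotone `s`, nonnegative `p`) plus (P-IC) and (E-IC). -/
def Implementable (δ : ℝ) (π w : ℝ → ℝ) (s p : ℕ → ℝ) : Prop :=
  IsContract δ s p ∧ Monotone s ∧ (∀ t, 0 ≤ p t) ∧
  (∀ t, π (s t) / (1 - δ) ≤ PiVal δ π s p t) ∧
  (∀ t, w (s t) / (1 - δ) ≤ WVal δ w s p (t + 1))

/-- An optimal contract maximizes the principal's time-0 profit among implementable contracts. -/
def Optimal (δ : ℝ) (π w : ℝ → ℝ) (s p : ℕ → ℝ) : Prop :=
  Implementable δ π w s p ∧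
  ∀ s' p' : ℕ → ℝ, Implementable δ π w s' p' → PiVal δ π s' p' 0 ≤ PiVal δ π s p 0

/-- Pareto efficiency among implementable contracts (principal and expert). -/
def ParetoEfficient (δ : ℝ) (π w : ℝ → ℝ) (s p : ℕ → ℝ) : Prop :=
  Implementable δ π w s p ∧
  ¬ ∃ s' p' : ℕ → ℝ, Implementable δ π w s' p' ∧
      PiVal δ π s p 0 ≤ PiVal δ π s' p' 0 ∧ WVal δ w s p 0 ≤ WVal δ w s' p' 0 ∧
      (PiVal δ π s p 0 < PiVal δ π s' p' 0 ∨ WVal δ w s p 0 < WVal δ w s' p' 0)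

noncomputable def Dser (δ : ℝ) (f : ℕ → ℝ) (t : ℕ) : ℝ := ∑' k : ℕ, δ ^ k * f (t + k)

def GoodF (δ : ℝ) (f : ℕ → ℝ) : Prop := ∀ t : ℕ, Summable (fun k : ℕ => δ ^ k * f (t + k))

lemma summable_of_abs_le {δ : ℝ} (hδ0 : 0 < δ) (hδ1 : δ < 1) {f : ℕ → ℝ} {C : ℝ}
    (hf : ∀ k, |f k| ≤ C) : Summable (fun k : ℕ => δ ^ k * f k) := by
  refine Summable.of_norm_bounded
    ((summable_geometric_of_lt_one hδ0.le hδ1).mul_left C) (fun k => ?_)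
  have h1 : |δ ^ k * f k| = δ ^ k * |f k| := by
    rw [abs_mul, abs_of_nonneg (pow_nonneg hδ0.le k)]
  rw [Real.norm_eq_abs, h1]
  show δ ^ k * |f k| ≤ C * δ ^ k
  rw [mul_comm C (δ ^ k)]
  exact mul_le_mul_of_nonneg_left (hf k) (pow_nonneg hδ0.le k)

lemma goodF_of_abs_le {δ : ℝ} (hδ0 : 0 < δ) (hδ1 : δ < 1) {f : ℕ → ℝ} {C : ℝ}
    (hf : ∀ k, |f k| ≤ C) : GoodF δ f :=
  fun t => summable_of_abs_le hδ0 hδ1 (fun k => hf (t + k))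

lemma goodF_comp {δ : ℝ} (hδ0 : 0 < δ) (hδ1 : δ < 1) {f : ℝ → ℝ} {s : ℕ → ℝ}
    (hfc : ContinuousOn f (Icc 0 1)) (hs : ∀ t, s t ∈ Icc (0:ℝ) 1) :
    GoodF δ (fun τ => f (s τ)) := by
  obtain ⟨C, hC⟩ := isCompact_Icc.exists_bound_of_continuousOn hfc
  exact goodF_of_abs_le hδ0 hδ1 (fun k => hC _ (hs k))

lemma goodF_of_summable {δ : ℝ} {p : ℕ → ℝ} (hδ0 : 0 < δ)
    (hp : Summable fun t => δ ^ t * p t) : GoodF δ p := by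
  intro t
  have h1 : Summable (fun k : ℕ => δ ^ (k + t) * p (k + t)) := (summable_nat_add_iff t).2 hp
  refine (h1.mul_left ((δ ^ t)⁻¹)).congr (fun k => ?_)
  have hne : (δ:ℝ) ^ t ≠ 0 := pow_ne_zero _ hδ0.ne'
  rw [pow_add, add_comm t k]
  field_simp

lemma GoodF.add' {δ : ℝ} {f g : ℕ → ℝ} (hf : GoodF δ f) (hg : GoodF δ g) :
    GoodF δ (fun τ => f τ + g τ) := fun t => by
  simpa [mul_add] using (hf t).add (hg t)

lemma GoodF.sub' {δ : ℝ} {f g : ℕ → ℝ} (hf : GoodF δ f) (hg : GoodF δ g) :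
    GoodF δ (fun τ => f τ - g τ) := fun t => by
  simpa [mul_sub] using (hf t).sub (hg t)

lemma Dser_add {δ : ℝ} {f g : ℕ → ℝ} (hf : GoodF δ f) (hg : GoodF δ g) (t : ℕ) :
    Dser δ (fun τ => f τ + g τ) t = Dser δ f t + Dser δ g t := by
  unfold Dser
  rw [← Summable.tsum_add (hf t) (hg t)]
  exact tsum_congr fun k => by ring

lemma Dser_sub {δ : ℝ} {f g : ℕ → ℝ} (hf : GoodF δ f) (hg : GoodF δ g) (t : ℕ) :
    Dser δ (fun τ => f τ - g τ) t = Dser δ f t - Dser δ g t := by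
  unfold Dser
  rw [← Summable.tsum_sub (hf t) (hg t)]
  exact tsum_congr fun k => by ring

lemma Dser_rec {δ : ℝ} {f : ℕ → ℝ} (hf : GoodF δ f) (t : ℕ) :
    Dser δ f t = f t + δ * Dser δ f (t + 1) := by
  unfold Dser
  rw [Summable.tsum_eq_zero_add (hf t)]
  have h1 : ∀ k : ℕ, δ ^ (k + 1) * f (t + (k + 1)) = δ * (δ ^ k * f (t + 1 + k)) := by
    intro k; rw [show t + (k + 1) = t + 1 + k by omega]; ring
  rw [tsum_congr h1, tsum_mul_left]
  simp

lemma Dser_const {δ : ℝ} (hδ0 : 0 < δ) (hδ1 : δ < 1) (c : ℝ) (t : ℕ) :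
    Dser δ (fun _ => c) t = c / (1 - δ) := by
  unfold Dser
  rw [tsum_congr (fun k : ℕ => (mul_comm (δ ^ k) c)), tsum_mul_left,
    tsum_geometric_of_lt_one hδ0.le hδ1, div_eq_mul_inv]

lemma Dser_mono {δ : ℝ} (hδ0 : 0 < δ) {f g : ℕ → ℝ} {t : ℕ}
    (h : ∀ τ, t ≤ τ → f τ ≤ g τ) (hf : GoodF δ f) (hg : GoodF δ g) :
    Dser δ f t ≤ Dser δ g t :=
  Summable.tsum_le_tsum (fun k => mul_le_mul_of_nonneg_left (h _ (by omega)) (pow_nonneg hδ0.le _))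
    (hf t) (hg t)

lemma single_le_Dser {δ : ℝ} (hδ0 : 0 < δ) {f : ℕ → ℝ} {t : ℕ} (hf : GoodF δ f)
    (h0 : ∀ τ, t ≤ τ → 0 ≤ f τ) (k : ℕ) :
    δ ^ k * f (t + k) ≤ Dser δ f t :=
  Summable.le_tsum (hf t) k (fun j _ => mul_nonneg (pow_nonneg hδ0.le _) (h0 _ (by omega)))

lemma Dser_congr {δ : ℝ} {f g : ℕ → ℝ} {t : ℕ} (h : ∀ τ, t ≤ τ → f τ = g τ) :
    Dser δ f t = Dser δ g t :=
  tsum_congr fun k => by rw [h (t + k) (by omega)]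

/-- surplus value -/
noncomputable def SVal (δ : ℝ) (π w : ℝ → ℝ) (s : ℕ → ℝ) : ℕ → ℝ :=
  Dser δ (fun τ => π (s τ) + w (s τ))

section Contract

variable {δ : ℝ} {π w : ℝ → ℝ} {s p : ℕ → ℝ}

lemma PiVal_eq_Dser (hδ0 : 0 < δ) (hδ1 : δ < 1) (hπc : ContinuousOn π (Icc 0 1))
    (hs : ∀ t, s t ∈ Icc (0:ℝ) 1) (hp : GoodF δ p) (t : ℕ) :
    PiVal δ π s p t = Dser δ (fun τ => π (s τ)) t - Dser δ p t :=
  Dser_sub (goodF_comp hδ0 hδ1 hπc hs) hp t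

lemma WVal_eq_Dser (hδ0 : 0 < δ) (hδ1 : δ < 1) (hwc : ContinuousOn w (Icc 0 1))
    (hs : ∀ t, s t ∈ Icc (0:ℝ) 1) (hp : GoodF δ p) (t : ℕ) :
    WVal δ w s p t = Dser δ (fun τ => w (s τ)) t + Dser δ p t :=
  Dser_add (goodF_comp hδ0 hδ1 hwc hs) hp t

lemma piw_sum (hδ0 : 0 < δ) (hδ1 : δ < 1) (hπc : ContinuousOn π (Icc 0 1))
    (hwc : ContinuousOn w (Icc 0 1)) (hs : ∀ t, s t ∈ Icc (0:ℝ) 1) (hp : GoodF δ p) (t : ℕ) :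
    PiVal δ π s p t + WVal δ w s p t = SVal δ π w s t := by
  rw [PiVal_eq_Dser hδ0 hδ1 hπc hs hp t, WVal_eq_Dser hδ0 hδ1 hwc hs hp t, SVal,
    Dser_add (goodF_comp hδ0 hδ1 hπc hs) (goodF_comp hδ0 hδ1 hwc hs)]
  ring

lemma WVal_rec (hδ0 : 0 < δ) (hδ1 : δ < 1) (hwc : ContinuousOn w (Icc 0 1))
    (hs : ∀ t, s t ∈ Icc (0:ℝ) 1) (hp : GoodF δ p) (t : ℕ) :
    WVal δ w s p t = (w (s t) + p t) + δ * WVal δ w s p (t + 1) :=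
  Dser_rec ((goodF_comp hδ0 hδ1 hwc hs).add' hp) t

lemma PiVal_rec (hδ0 : 0 < δ) (hδ1 : δ < 1) (hπc : ContinuousOn π (Icc 0 1))
    (hs : ∀ t, s t ∈ Icc (0:ℝ) 1) (hp : GoodF δ p) (t : ℕ) :
    PiVal δ π s p t = (π (s t) - p t) + δ * PiVal δ π s p (t + 1) :=
  Dser_rec ((goodF_comp hδ0 hδ1 hπc hs).sub' hp) t

lemma SVal_rec (hδ0 : 0 < δ) (hδ1 : δ < 1) (hπc : ContinuousOn π (Icc 0 1))
    (hwc : ContinuousOn w (Icc 0 1)) (hs : ∀ t, s t ∈ Icc (0:ℝ) 1) (t : ℕ) :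
    SVal δ π w s t = (π (s t) + w (s t)) + δ * SVal δ π w s (t + 1) :=
  Dser_rec ((goodF_comp hδ0 hδ1 hπc hs).add' (goodF_comp hδ0 hδ1 hwc hs)) t

/-- expert lower bound, uniform over all t (with `t-1` truncated subtraction). -/
lemma wlb (hδ : δ ∈ Ioo (0:ℝ) 1) (hwc : ContinuousOn w (Icc 0 1))
    (himp : Implementable δ π w s p) (t : ℕ) :
    w (s (t - 1)) / (1 - δ) ≤ WVal δ w s p t := by
  obtain ⟨⟨hs, hs0, hpsum⟩, hmono, hpnn, hPIC, hEIC⟩ := himp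
  match t with
  | Nat.succ n => simpa using hEIC n
  | 0 =>
    have hp : GoodF δ p := goodF_of_summable hδ.1 hpsum
    have hrec := WVal_rec hδ.1 hδ.2 hwc hs hp 0
    have h1 : w (s 0) / (1 - δ) ≤ WVal δ w s p 1 := hEIC 0
    have h1δ : (0:ℝ) < 1 - δ := by linarith [hδ.2]
    have key : w (s 0) + δ * (w (s 0) / (1 - δ)) = w (s 0) / (1 - δ) := by
      field_simp
      ring
    have := mul_le_mul_of_nonneg_left h1 hδ.1.le
    simp only [Nat.zero_sub]
    rw [hrec]
    nlinarith [hpnn 0]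

def FPath (δ : ℝ) (π w : ℝ → ℝ) (s : ℕ → ℝ) : Prop :=
  (∀ t, s t ∈ Set.Icc (0:ℝ) 1) ∧ s 0 = 0 ∧ Monotone s ∧
  ∀ t : ℕ, π (s t) / (1 - δ) + w (s (t - 1)) / (1 - δ) ≤ SVal δ π w s t

lemma fpath_of_imp (hδ : δ ∈ Ioo (0:ℝ) 1) (hπc : ContinuousOn π (Icc 0 1))
    (hwc : ContinuousOn w (Icc 0 1)) (himp : Implementable δ π w s p) :
    FPath δ π w s := by
  obtain ⟨⟨hs, hs0, hpsum⟩, hmono, hpnn, hPIC, hEIC⟩ := himp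
  refine ⟨hs, hs0, hmono, fun t => ?_⟩
  have hp : GoodF δ p := goodF_of_summable hδ.1 hpsum
  have h1 := hPIC t
  have h2 := wlb hδ hwc ⟨⟨hs, hs0, hpsum⟩, hmono, hpnn, hPIC, hEIC⟩ t
  have h3 := piw_sum hδ.1 hδ.2 hπc hwc hs hp t
  linarith

end Contract

noncomputable def canonQ (δ : ℝ) (w : ℝ → ℝ) (s : ℕ → ℝ) (c : ℝ) : ℕ → ℝ :=
  fun t => if t = 0 then c else (w (s (t - 1)) - w (s t)) / (1 - δ)

section Canon

variable {δ : ℝ} {π w : ℝ → ℝ} {s : ℕ → ℝ}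

lemma canon_main (hδ : δ ∈ Ioo (0:ℝ) 1) (hπc : ContinuousOn π (Icc 0 1))
    (hwc : ContinuousOn w (Icc 0 1)) (hwa : StrictAntiOn w (Icc 0 1))
    (hF : FPath δ π w s) {c : ℝ} (hc0 : 0 ≤ c)
    (hc1 : π (s 0) / (1 - δ) + w (s 0) / (1 - δ) + c ≤ SVal δ π w s 0) :
    Implementable δ π w s (canonQ δ w s c) ∧
    (∀ t, 1 ≤ t → WVal δ w s (canonQ δ w s c) t = w (s (t - 1)) / (1 - δ)) ∧
    WVal δ w s (canonQ δ w s c) 0 = w (s 0) / (1 - δ) + c ∧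
    PiVal δ π s (canonQ δ w s c) 0 = SVal δ π w s 0 - w (s 0) / (1 - δ) - c := by
  obtain ⟨hs, hs0, hmono, hFi⟩ := hF
  have hδ0 := hδ.1
  have hδ1 := hδ.2
  have h1δ : (0:ℝ) < 1 - δ := by linarith
  have hne : (1:ℝ) - δ ≠ 0 := h1δ.ne'
  obtain ⟨Cw, hCw⟩ := isCompact_Icc.exists_bound_of_continuousOn hwc
  have hCw' : ∀ t, |w (s t)| ≤ Cw := fun t => hCw _ (hs t)
  set q : ℕ → ℝ := canonQ δ w s c with hqdef
  have hqabs : ∀ t, |q t| ≤ |c| + 2 * Cw / (1 - δ) := by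
    intro t
    have hCw0 : (0:ℝ) ≤ Cw := le_trans (abs_nonneg _) (hCw' 0)
    have hpos : (0:ℝ) ≤ 2 * Cw / (1 - δ) := by positivity
    rcases Nat.eq_zero_or_pos t with h | h
    · subst h; simp only [hqdef, canonQ, eq_self_iff_true, if_true]; linarith
    · simp only [hqdef, canonQ, if_neg (by omega : t ≠ 0)]
      have h1 : |w (s (t - 1)) - w (s t)| ≤ 2 * Cw := by
        calc |w (s (t - 1)) - w (s t)| ≤ |w (s (t - 1))| + |w (s t)| := abs_sub _ _
          _ ≤ 2 * Cw := by linarith [hCw' (t - 1), hCw' t]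
      rw [abs_div, abs_of_pos h1δ]
      have h2 : |w (s (t - 1)) - w (s t)| / (1 - δ) ≤ 2 * Cw / (1 - δ) := by gcongr
      linarith [abs_nonneg c]
  have hqgood : GoodF δ q := goodF_of_abs_le hδ0 hδ1 hqabs
  have hqsum : Summable fun t => δ ^ t * q t := by simpa using hqgood 0
  have hqnn : ∀ t, 0 ≤ q t := by
    intro t
    rcases Nat.eq_zero_or_pos t with h | h
    · subst h; simpa [hqdef, canonQ] using hc0
    · simp only [hqdef, canonQ, if_neg (by omega : t ≠ 0)]
      have hle : s (t - 1) ≤ s t := hmono (by omega : t - 1 ≤ t)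
      have : w (s t) ≤ w (s (t - 1)) := hwa.antitoneOn (hs (t - 1)) (hs t) hle
      exact div_nonneg (by linarith) h1δ.le
  have hgw : GoodF δ (fun τ => w (s τ)) := goodF_comp hδ0 hδ1 hwc hs
  have hW1 : ∀ t, 1 ≤ t → WVal δ w s q t = w (s (t - 1)) / (1 - δ) := by
    intro t ht
    have hq2 : ∀ k : ℕ, δ ^ k * q (t + k)
        = (1 - δ)⁻¹ * (δ ^ k * w (s ((t - 1) + k)) - δ ^ k * w (s (t + k))) := by
      intro k
      simp only [hqdef, canonQ, if_neg (by omega : t + k ≠ 0)]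
      rw [show t + k - 1 = (t - 1) + k by omega]
      field_simp
    have hDq : Dser δ q t = (1 - δ)⁻¹ *
        (Dser δ (fun τ => w (s τ)) (t - 1) - Dser δ (fun τ => w (s τ)) t) := by
      unfold Dser
      rw [tsum_congr hq2, tsum_mul_left, ← Summable.tsum_sub (hgw (t - 1)) (hgw t)]
    have hBrec : Dser δ (fun τ => w (s τ)) (t - 1)
        = w (s (t - 1)) + δ * Dser δ (fun τ => w (s τ)) t := by
      have := Dser_rec hgw (t - 1)
      rwa [show t - 1 + 1 = t by omega] at this
    rw [WVal_eq_Dser hδ0 hδ1 hwc hs hqgood t, hDq, hBrec]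
    field_simp
    ring
  have hW0 : WVal δ w s q 0 = w (s 0) / (1 - δ) + c := by
    rw [WVal_rec hδ0 hδ1 hwc hs hqgood 0, hW1 1 le_rfl]
    simp only [hqdef, canonQ, eq_self_iff_true, if_true]
    norm_num
    field_simp
    ring
  have hEIC : ∀ t, w (s t) / (1 - δ) ≤ WVal δ w s q (t + 1) := by
    intro t
    rw [hW1 (t + 1) (by omega)]
    simp
  have hPi : ∀ t, PiVal δ π s q t = SVal δ π w s t - WVal δ w s q t := by
    intro t; have := piw_sum hδ0 hδ1 hπc hwc hs hqgood t; linarith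
  have hPIC : ∀ t, π (s t) / (1 - δ) ≤ PiVal δ π s q t := by
    intro t
    rcases Nat.eq_zero_or_pos t with h | h
    · subst h; rw [hPi 0, hW0]; linarith [hc1]
    · rw [hPi t, hW1 t (by omega)]; linarith [hFi t]
  exact ⟨⟨⟨hs, hs0, hqsum⟩, hmono, hqnn, hPIC, hEIC⟩, hW1, hW0, by rw [hPi 0, hW0]; ring⟩

end Canon

section Opt

variable {δ : ℝ} {π w : ℝ → ℝ}

lemma le_of_div_le_div {a b c : ℝ} (hc : 0 < c) (h : a / c ≤ b / c) : a ≤ b := by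
  have := mul_le_mul_of_nonneg_right h hc.le
  rwa [div_mul_cancel₀ _ hc.ne', div_mul_cancel₀ _ hc.ne'] at this

lemma opt_facts (hδ : δ ∈ Ioo (0:ℝ) 1) (hπc : ContinuousOn π (Icc 0 1))
    (hwc : ContinuousOn w (Icc 0 1)) (hwa : StrictAntiOn w (Icc 0 1))
    {sS pS : ℕ → ℝ} (hopt : Optimal δ π w sS pS) :
    WVal δ w sS pS 0 = w (sS 0) / (1 - δ) ∧
    PiVal δ π sS pS 0 = SVal δ π w sS 0 - w (sS 0) / (1 - δ) ∧
    ∀ s p : ℕ → ℝ, Implementable δ π w s p → SVal δ π w s 0 ≤ SVal δ π w sS 0 := by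
  have himpS := hopt.1
  have hFS := fpath_of_imp hδ hπc hwc himpS
  have hgoodpS : GoodF δ pS := goodF_of_summable hδ.1 himpS.1.2.2
  have hc1 : π (sS 0) / (1 - δ) + w (sS 0) / (1 - δ) + 0 ≤ SVal δ π w sS 0 := by
    have := hFS.2.2.2 0
    simpa using this
  obtain ⟨himpQ, _, hWQ0, hPiQ0⟩ := canon_main hδ hπc hwc hwa hFS le_rfl hc1
  have hle := hopt.2 _ _ himpQ
  have hsum := piw_sum hδ.1 hδ.2 hπc hwc himpS.1.1 hgoodpS 0
  have hwlb := wlb hδ hwc himpS 0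
  simp only [Nat.zero_sub] at hwlb
  have hW0 : WVal δ w sS pS 0 = w (sS 0) / (1 - δ) := by
    rw [hPiQ0] at hle
    have : PiVal δ π sS pS 0 = SVal δ π w sS 0 - WVal δ w sS pS 0 := by linarith
    rw [this] at hle
    linarith
  refine ⟨hW0, by linarith, ?_⟩
  intro s p himp
  have hF := fpath_of_imp hδ hπc hwc himp
  have hc1' : π (s 0) / (1 - δ) + w (s 0) / (1 - δ) + 0 ≤ SVal δ π w s 0 := by
    have := hF.2.2.2 0
    simpa using this
  obtain ⟨himpQ', _, _, hPiQ0'⟩ := canon_main hδ hπc hwc hwa hF le_rfl hc1'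
  have hle' := hopt.2 _ _ himpQ'
  rw [hPiQ0'] at hle'
  have hweq : w (s 0) / (1 - δ) = w (sS 0) / (1 - δ) := by
    rw [himp.1.2.1, himpS.1.2.1]
  linarith

lemma exists_gt_of_slack (hδ : δ ∈ Ioo (0:ℝ) 1) (hwa : StrictAntiOn w (Icc 0 1))
    {s : ℕ → ℝ} (hF : FPath δ π w s) {T : ℕ}
    (hslack : π (s T) / (1 - δ) + w (s (T - 1)) / (1 - δ) < SVal δ π w s T) :
    ∃ τ, s T < s τ := by
  obtain ⟨hs, hs0, hmono, hFi⟩ := hF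
  have h1δ : (0:ℝ) < 1 - δ := by linarith [hδ.2]
  by_contra hcon
  push_neg at hcon
  have hexa : ∃ a, s a = s T := ⟨T, rfl⟩
  have haeq : s (Nat.find hexa) = s T := Nat.find_spec hexa
  set a := Nat.find hexa with ha
  have hconst : ∀ k, s (a + k) = s T := fun k =>
    le_antisymm (hcon _) (haeq ▸ hmono (Nat.le_add_right a k))
  rcases Nat.eq_zero_or_pos a with h0 | hpos
  · have hconst' : ∀ τ, s τ = s T := fun τ => by
      have := hconst τ; rwa [h0, Nat.zero_add] at this
    have hST : SVal δ π w s T = (π (s T) + w (s T)) / (1 - δ) := by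
      have heq : SVal δ π w s T = Dser δ (fun _ => π (s T) + w (s T)) T :=
        Dser_congr (fun τ _ => by rw [hconst' τ])
      rw [heq, Dser_const hδ.1 hδ.2]
    rw [hST, hconst' (T - 1)] at hslack
    have : π (s T) / (1 - δ) + w (s T) / (1 - δ) = (π (s T) + w (s T)) / (1 - δ) :=
      (add_div _ _ _).symm
    linarith
  · have hSa : SVal δ π w s a = (π (s T) + w (s T)) / (1 - δ) := by
      have heq : SVal δ π w s a = Dser δ (fun _ => π (s T) + w (s T)) a :=
        Dser_congr (fun τ hτ => by
          rw [show τ = a + (τ - a) by omega, hconst (τ - a)])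
      rw [heq, Dser_const hδ.1 hδ.2]
    have ha1 : s (a - 1) ≠ s T := fun hcontra => Nat.find_min hexa (by omega : a - 1 < a) hcontra
    have ha3 : s (a - 1) < s T := lt_of_le_of_ne (hcon _) ha1
    have hFa := hFi a
    rw [hSa, haeq] at hFa
    have hw1 : w (s T) < w (s (a - 1)) := hwa (hs (a - 1)) (hs T) ha3
    have heq2 : (π (s T) + w (s T)) / (1 - δ) = π (s T) / (1 - δ) + w (s T) / (1 - δ) :=
      add_div _ _ _
    have h4 : w (s (a - 1)) / (1 - δ) ≤ w (s T) / (1 - δ) := by linarith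
    have := le_of_div_le_div h1δ h4
    linarith

end Opt

section Binding

variable {δ : ℝ} {π w : ℝ → ℝ}

lemma binding (hδ : δ ∈ Ioo (0:ℝ) 1) (hπc : ContinuousOn π (Icc 0 1))
    (hwc : ContinuousOn w (Icc 0 1)) (hwa : StrictAntiOn w (Icc 0 1))
    (hGm : StrictMonoOn (fun x => π x + w x) (Icc 0 1))
    {sS pS : ℕ → ℝ} (hopt : Optimal δ π w sS pS) :
    ∀ T : ℕ, 1 ≤ T → SVal δ π w sS T = π (sS T) / (1 - δ) + w (sS (T - 1)) / (1 - δ) := by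
  intro T hT
  have hδ0 := hδ.1
  have hδ1 := hδ.2
  have h1δ : (0:ℝ) < 1 - δ := by linarith
  obtain ⟨hs, hs0, hmono, hFi⟩ := fpath_of_imp hδ hπc hwc hopt.1
  refine le_antisymm ?_ (hFi T)
  by_contra hgt'
  push_neg at hgt'
  have hgt : π (sS T) / (1 - δ) + w (sS (T - 1)) / (1 - δ) < SVal δ π w sS T := hgt'
  obtain ⟨τw, hτw⟩ := exists_gt_of_slack hδ hwa ⟨hs, hs0, hmono, hFi⟩ hgt
  have hexτ : ∃ τ, sS T < sS τ := ⟨τw, hτw⟩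
  have hτ1 : sS T < sS (Nat.find hexτ) := Nat.find_spec hexτ
  set τ1 := Nat.find hexτ with hτ1def
  have hmin : ∀ j, j < τ1 → sS j ≤ sS T := fun j hj => not_lt.1 (Nat.find_min hexτ hj)
  have hTτ1 : T < τ1 := by
    by_contra h
    push_neg at h
    exact absurd (hmono h) (not_le.2 hτ1)
  set b := τ1 - 1 with hbdef
  have hb1 : b + 1 = τ1 := by omega
  have hTb : T ≤ b := by omega
  have hblk : ∀ t, T ≤ t → t ≤ b → sS t = sS T :=
    fun t h1 h2 => le_antisymm (hmin t (by omega)) (hmono h1)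
  have hxlt : sS T < sS (b + 1) := by rw [hb1]; exact hτ1
  have hGmono : MonotoneOn (fun x => π x + w x) (Icc (0:ℝ) 1) := hGm.monotoneOn
  have hgoodG : GoodF δ (fun τ => π (sS τ) + w (sS τ)) :=
    (goodF_comp hδ0 hδ1 hπc hs).add' (goodF_comp hδ0 hδ1 hwc hs)
  have hgoodC : ∀ c : ℝ, GoodF δ (fun _ => c) :=
    fun c => goodF_of_abs_le hδ0 hδ1 (fun _ => le_refl |c|)
  -- strict slack at all t in [T, b]
  have hsl : ∀ t, T ≤ t → t ≤ b →
      π (sS t) / (1 - δ) + w (sS (t - 1)) / (1 - δ) < SVal δ π w sS t := by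
    intro t h1 h2
    rcases eq_or_lt_of_le h1 with rfl | hlt
    · exact hgt
    · have he1 : sS t = sS T := hblk t h1 h2
      have he2 : sS (t - 1) = sS T := hblk (t - 1) (by omega) (by omega)
      have hd : SVal δ π w sS t - (π (sS T) + w (sS T)) / (1 - δ)
          = Dser δ (fun τ => (π (sS τ) + w (sS τ)) - (π (sS T) + w (sS T))) t := by
        rw [Dser_sub hgoodG (hgoodC (π (sS T) + w (sS T))) t, Dser_const hδ0 hδ1]
        rfl
      have hnn : ∀ τ, t ≤ τ → 0 ≤ (π (sS τ) + w (sS τ)) - (π (sS T) + w (sS T)) := by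
        intro τ hτ
        have hle : sS T ≤ sS τ := he1 ▸ hmono hτ
        have := hGmono (hs T) (hs τ) hle
        simpa using sub_nonneg.2 this
      have hsingle := single_le_Dser hδ0 (hgoodG.sub' (hgoodC _)) hnn (b + 1 - t)
      rw [show t + (b + 1 - t) = b + 1 by omega] at hsingle
      have hpos : 0 < (π (sS (b + 1)) + w (sS (b + 1))) - (π (sS T) + w (sS T)) := by
        have := hGm (hs T) (hs (b + 1)) hxlt
        simpa using sub_pos.2 this
      have hδpow : (0:ℝ) < δ ^ (b + 1 - t) := pow_pos hδ0 _
      have hdiv : π (sS T) / (1 - δ) + w (sS T) / (1 - δ) = (π (sS T) + w (sS T)) / (1 - δ) :=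
        (add_div _ _ _).symm
      rw [he1, he2]
      nlinarith [hsingle, hd]
  -- minimum slack
  have hneF : (Finset.Icc T b).Nonempty := ⟨T, Finset.mem_Icc.2 ⟨le_rfl, hTb⟩⟩
  set e : ℕ → ℝ := fun t => SVal δ π w sS t - π (sS t) / (1 - δ) - w (sS (t - 1)) / (1 - δ)
    with hedef
  set m := (Finset.Icc T b).inf' hneF e with hmdef
  have hm0 : 0 < m := by
    rw [hmdef, Finset.lt_inf'_iff]
    intro i hi
    rw [Finset.mem_Icc] at hi
    have := hsl i hi.1 hi.2
    simp only [hedef]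
    linarith
  have hmle : ∀ t, T ≤ t → t ≤ b → m ≤ e t :=
    fun t h1 h2 => Finset.inf'_le e (Finset.mem_Icc.2 ⟨h1, h2⟩)
  -- choose the perturbed value x
  have hsub : Ioc (sS T) (sS (b + 1)) ⊆ Icc (0:ℝ) 1 :=
    fun x hx => ⟨le_trans (hs T).1 hx.1.le, le_trans hx.2 (hs (b + 1)).2⟩
  have hcw : ContinuousWithinAt π (Ioc (sS T) (sS (b + 1))) (sS T) :=
    (hπc (sS T) (hs T)).mono hsub
  haveI := left_nhdsWithin_Ioc_neBot hxlt
  have hlt' : π (sS T) < π (sS T) + (1 - δ) * m := by nlinarith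
  obtain ⟨x, hxmem, hxπ⟩ :=
    (eventually_mem_nhdsWithin.and (hcw.eventually (gt_mem_nhds hlt'))).exists
  obtain ⟨hx1, hx2⟩ := hxmem
  have hxIcc : x ∈ Icc (0:ℝ) 1 := hsub ⟨hx1, hx2⟩
  -- perturbed path
  set s' : ℕ → ℝ := fun τ => if T ≤ τ ∧ τ ≤ b then x else sS τ with hs'def
  have hs'in : ∀ t, T ≤ t → t ≤ b → s' t = x := fun t h1 h2 => by
    simp only [hs'def, if_pos (And.intro h1 h2)]
  have hs'out : ∀ t, (t < T ∨ b < t) → s' t = sS t := fun t h => by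
    simp only [hs'def]
    rw [if_neg (by omega)]
  have hs'mem : ∀ τ, s' τ ∈ Icc (0:ℝ) 1 := by
    intro τ
    simp only [hs'def]
    split_ifs
    exacts [hxIcc, hs τ]
  have hs'0 : s' 0 = 0 := by rw [hs'out 0 (Or.inl (by omega))]; exact hs0
  have hptw : ∀ τ, sS τ ≤ s' τ := by
    intro τ
    simp only [hs'def]
    split_ifs with h
    · rw [hblk τ h.1 h.2]; exact hx1.le
    · exact le_rfl
  have hs'mono : Monotone s' := by
    intro i j hij
    simp only [hs'def]
    split_ifs with h1 h2 h2
    · exact le_rfl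
    · have hj : b + 1 ≤ j := by omega
      exact hx2.trans (hmono hj)
    · have hi : i ≤ T := by omega
      exact (hmono hi).trans hx1.le
    · exact hmono hij
  have hgoodG' : GoodF δ (fun τ => π (s' τ) + w (s' τ)) :=
    (goodF_comp hδ0 hδ1 hπc hs'mem).add' (goodF_comp hδ0 hδ1 hwc hs'mem)
  have hSmono : ∀ t, SVal δ π w sS t ≤ SVal δ π w s' t := by
    intro t
    refine Dser_mono hδ0 (fun τ _ => ?_) hgoodG hgoodG'
    have := hGmono (hs τ) (hs'mem τ) (hptw τ)
    simpa using this
  have hStail : ∀ t, b + 1 ≤ t → SVal δ π w s' t = SVal δ π w sS t := by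
    intro t ht
    exact Dser_congr (fun τ hτ => by rw [hs'out τ (Or.inr (by omega))])
  -- feasibility inequality for the perturbed path
  have hFi' : ∀ t : ℕ, π (s' t) / (1 - δ) + w (s' (t - 1)) / (1 - δ) ≤ SVal δ π w s' t := by
    intro t
    rcases lt_or_ge t T with hcase | hcase
    · rw [hs'out t (Or.inl hcase), hs'out (t - 1) (Or.inl (by omega))]
      exact le_trans (hFi t) (hSmono t)
    rcases le_or_gt t b with hcase2 | hcase2
    · -- T ≤ t ≤ b
      rw [hs'in t hcase hcase2]
      have hwcomp : w (s' (t - 1)) ≤ w (sS (t - 1)) := by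
        by_cases hTt : t = T
        · rw [hs'out (t - 1) (Or.inl (by omega))]
        · have h1 : T ≤ t - 1 := by omega
          have h2 : t - 1 ≤ b := by omega
          rw [hs'in (t - 1) h1 h2, hblk (t - 1) h1 h2]
          exact hwa.antitoneOn (hs T) hxIcc hx1.le
      have hπx : π x < π (sS t) + (1 - δ) * m := by
        rw [hblk t hcase hcase2]; exact hxπ
      have hmt := hmle t hcase hcase2
      simp only [hedef] at hmt
      have key : π x / (1 - δ) < π (sS t) / (1 - δ) + m := by
        have h' : (π x - π (sS t)) / (1 - δ) < m := by
          rw [div_lt_iff₀ h1δ]; nlinarith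
        have h'' : (π x - π (sS t)) / (1 - δ) = π x / (1 - δ) - π (sS t) / (1 - δ) :=
          sub_div _ _ _
        linarith
      have hwdiv : w (s' (t - 1)) / (1 - δ) ≤ w (sS (t - 1)) / (1 - δ) := by gcongr
      have := hSmono t
      linarith
    · -- b < t
      rw [hStail t (by omega), hs'out t (Or.inr hcase2)]
      have hwcomp : w (s' (t - 1)) ≤ w (sS (t - 1)) := by
        by_cases hbt : t = b + 1
        · rw [show t - 1 = b by omega, hs'in b hTb le_rfl, hblk b hTb le_rfl]
          exact hwa.antitoneOn (hs T) hxIcc hx1.le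
        · rw [hs'out (t - 1) (Or.inr (by omega))]
      have hwdiv : w (s' (t - 1)) / (1 - δ) ≤ w (sS (t - 1)) / (1 - δ) := by gcongr
      linarith [hFi t]
  -- strict surplus increase
  have hstrict : SVal δ π w sS 0 < SVal δ π w s' 0 := by
    have hd : SVal δ π w s' 0 - SVal δ π w sS 0
        = Dser δ (fun τ => (π (s' τ) + w (s' τ)) - (π (sS τ) + w (sS τ))) 0 :=
      (Dser_sub hgoodG' hgoodG 0).symm
    have hnn : ∀ τ, 0 ≤ τ → 0 ≤ (π (s' τ) + w (s' τ)) - (π (sS τ) + w (sS τ)) := by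
      intro τ _
      have := hGmono (hs τ) (hs'mem τ) (hptw τ)
      simpa using sub_nonneg.2 this
    have hsingle := single_le_Dser hδ0 (hgoodG'.sub' hgoodG) hnn (t := 0) T
    rw [show 0 + T = T by omega] at hsingle
    have hlt2 : sS T < s' T := by rw [hs'in T le_rfl hTb]; exact hx1
    have hpos : 0 < (π (s' T) + w (s' T)) - (π (sS T) + w (sS T)) := by
      have := hGm (hs T) (hs'mem T) hlt2
      simpa using sub_pos.2 this
    nlinarith [pow_pos hδ0 T]
  -- contradiction with optimality via the canonical contract on s'
  have hF' : FPath δ π w s' := ⟨hs'mem, hs'0, hs'mono, hFi'⟩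
  have hc1' : π (s' 0) / (1 - δ) + w (s' 0) / (1 - δ) + 0 ≤ SVal δ π w s' 0 := by
    simpa using hFi' 0
  obtain ⟨himpQ, _, _, hPiQ0⟩ := canon_main hδ hπc hwc hwa hF' le_rfl hc1'
  obtain ⟨hWS0, hPiS0, hmax⟩ := opt_facts hδ hπc hwc hwa hopt
  have hle := hopt.2 _ _ himpQ
  rw [hPiQ0, hPiS0] at hle
  have hweq : w (s' 0) / (1 - δ) = w (sS 0) / (1 - δ) := by rw [hs'0, hs0]
  linarith

end Binding

section Unique

variable {δ : ℝ} {π w : ℝ → ℝ}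

lemma bind_rec (hδ : δ ∈ Ioo (0:ℝ) 1) {s : ℕ → ℝ}
    (good : GoodF δ (fun τ => π (s τ) + w (s τ)))
    (hb : ∀ T, 1 ≤ T → SVal δ π w s T = π (s T) / (1 - δ) + w (s (T - 1)) / (1 - δ)) :
    ∀ t, 1 ≤ t → δ * π (s (t + 1)) = δ * π (s t) + w (s (t - 1)) - w (s t) := by
  intro t ht
  have hne : (1:ℝ) - δ ≠ 0 := ne_of_gt (by linarith [hδ.2])
  have hrec : SVal δ π w s t = (π (s t) + w (s t)) + δ * SVal δ π w s (t + 1) :=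
    Dser_rec good t
  rw [hb t ht, hb (t + 1) (by omega), Nat.add_sub_cancel] at hrec
  field_simp at hrec
  linarith

lemma path_unique (hδ : δ ∈ Ioo (0:ℝ) 1) (hπm : StrictMonoOn π (Icc 0 1))
    {s1 s2 : ℕ → ℝ} (h1 : ∀ t, s1 t ∈ Icc (0:ℝ) 1) (h2 : ∀ t, s2 t ∈ Icc (0:ℝ) 1)
    (h10 : s1 0 = 0) (h20 : s2 0 = 0)
    (good1 : GoodF δ (fun τ => π (s1 τ) + w (s1 τ)))
    (good2 : GoodF δ (fun τ => π (s2 τ) + w (s2 τ)))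
    (hb1 : ∀ T, 1 ≤ T → SVal δ π w s1 T = π (s1 T) / (1 - δ) + w (s1 (T - 1)) / (1 - δ))
    (hb2 : ∀ T, 1 ≤ T → SVal δ π w s2 T = π (s2 T) / (1 - δ) + w (s2 (T - 1)) / (1 - δ))
    (hS : SVal δ π w s1 0 = SVal δ π w s2 0) :
    ∀ t, s1 t = s2 t := by
  have hδne : δ ≠ 0 := hδ.1.ne'
  have hne : (1:ℝ) - δ ≠ 0 := ne_of_gt (by linarith [hδ.2])
  have hinj := hπm.injOn
  have hstep1 : s1 1 = s2 1 := by
    have hr1 : SVal δ π w s1 0 = (π (s1 0) + w (s1 0)) + δ * SVal δ π w s1 1 :=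
      Dser_rec good1 0
    have hr2 : SVal δ π w s2 0 = (π (s2 0) + w (s2 0)) + δ * SVal δ π w s2 1 :=
      Dser_rec good2 0
    rw [hb1 1 le_rfl] at hr1
    rw [hb2 1 le_rfl] at hr2
    simp only [Nat.sub_self] at hr1 hr2
    rw [h10] at hr1
    rw [h20] at hr2
    rw [hS] at hr1
    have heq : δ * (π (s1 1) / (1 - δ) + w 0 / (1 - δ))
        = δ * (π (s2 1) / (1 - δ) + w 0 / (1 - δ)) := by linarith
    have h3 := mul_left_cancel₀ hδne heq
    have h4 : π (s1 1) / (1 - δ) = π (s2 1) / (1 - δ) := by linarith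
    have h5 : π (s1 1) = π (s2 1) := by
      field_simp at h4
      exact h4
    exact hinj (h1 1) (h2 1) h5
  have main : ∀ t, s1 t = s2 t ∧ s1 (t + 1) = s2 (t + 1) := by
    intro t
    induction t with
    | zero => exact ⟨h10.trans h20.symm, hstep1⟩
    | succ n ih =>
      refine ⟨ih.2, ?_⟩
      have r1 := bind_rec hδ good1 hb1 (n + 1) (by omega)
      have r2 := bind_rec hδ good2 hb2 (n + 1) (by omega)
      rw [Nat.add_sub_cancel] at r1 r2
      rw [ih.1, ih.2] at r1
      have h6 : δ * π (s1 (n + 1 + 1)) = δ * π (s2 (n + 1 + 1)) := by rw [r1, r2]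
      exact hinj (h1 _) (h2 _) (mul_left_cancel₀ hδne h6)
  exact fun t => (main t).1

end Unique

/-- Characterization of Pareto-efficient contracts. -/
theorem pareto_efficient_iff
    (δ : ℝ) (hδ : δ ∈ Set.Ioo (0 : ℝ) 1) (π w : ℝ → ℝ)
    (hπc : ContinuousOn π (Set.Icc 0 1)) (hwc : ContinuousOn w (Set.Icc 0 1))
    (hπm : StrictMonoOn π (Set.Icc 0 1)) (hwa : StrictAntiOn w (Set.Icc 0 1))
    (hGm : StrictMonoOn (fun x => π x + w x) (Set.Icc 0 1))
    (sStar pStar : ℕ → ℝ) (hopt : Optimal δ π w sStar pStar)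
    (s p : ℕ → ℝ) (himp : Implementable δ π w s p) :
    ParetoEfficient δ π w s p ↔
      ((∀ t, s t = sStar t) ∧
        0 ≤ p 0 ∧ p 0 ≤ δ * (π (sStar 1) - π 0) / (1 - δ) ∧
        (∀ t : ℕ, 1 ≤ t → p t = (w (sStar (t - 1)) - w (sStar t)) / (1 - δ))) := by
  have hδ0 := hδ.1
  have hδ1 := hδ.2
  have h1δ : (0:ℝ) < 1 - δ := by linarith
  have himpS := hopt.1
  obtain ⟨hWS0, hPiS0, hmax⟩ := opt_facts hδ hπc hwc hwa hopt
  have hs0 : s 0 = 0 := himp.1.2.1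
  have hS0 : sStar 0 = 0 := himpS.1.2.1
  have hpgood : GoodF δ p := goodF_of_summable hδ0 himp.1.2.2
  have hsum0 := piw_sum hδ0 hδ1 hπc hwc himp.1.1 hpgood 0
  constructor
  · intro hpe
    -- Step A : equal surplus
    have hwlb0 := wlb hδ hwc himp 0
    simp only [Nat.zero_sub] at hwlb0
    have ha1 : w (s 0) / (1 - δ) = w (sStar 0) / (1 - δ) := by rw [hs0, hS0]
    have hFS := fpath_of_imp hδ hπc hwc himpS
    have hc0 : 0 ≤ WVal δ w s p 0 - w (sStar 0) / (1 - δ) := by linarith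
    have hPIC0 := himp.2.2.2.1 0
    have hc1 : π (sStar 0) / (1 - δ) + w (sStar 0) / (1 - δ)
        + (WVal δ w s p 0 - w (sStar 0) / (1 - δ)) ≤ SVal δ π w sStar 0 := by
      have ha2 : π (sStar 0) / (1 - δ) = π (s 0) / (1 - δ) := by rw [hs0, hS0]
      have := hmax s p himp
      linarith
    obtain ⟨himpQ, hWQ1, hWQ0, hPiQ0⟩ := canon_main hδ hπc hwc hwa hFS hc0 hc1
    have hWQ0' : WVal δ w sStar
        (canonQ δ w sStar (WVal δ w s p 0 - w (sStar 0) / (1 - δ))) 0 = WVal δ w s p 0 := by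
      rw [hWQ0]; ring
    have hPiQ0' : PiVal δ π sStar
        (canonQ δ w sStar (WVal δ w s p 0 - w (sStar 0) / (1 - δ))) 0
        = SVal δ π w sStar 0 - WVal δ w s p 0 := by
      rw [hPiQ0]; ring
    have hSeq : SVal δ π w s 0 = SVal δ π w sStar 0 := by
      rcases eq_or_lt_of_le (hmax s p himp) with h | h
      · exact h
      · exfalso
        exact hpe.2 ⟨sStar, _, himpQ, by linarith, le_of_eq hWQ0'.symm, Or.inl (by linarith)⟩
    -- Step B : the canonical contract on s is optimal, hence binding holds for s
    have hF := fpath_of_imp hδ hπc hwc himp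
    have hc1'' : π (s 0) / (1 - δ) + w (s 0) / (1 - δ) + 0 ≤ SVal δ π w s 0 := by
      simpa using hF.2.2.2 0
    obtain ⟨himpQ2, _, _, hPiQ20⟩ := canon_main hδ hπc hwc hwa hF le_rfl hc1''
    have hopt2 : Optimal δ π w s (canonQ δ w s 0) := by
      refine ⟨himpQ2, fun s' p' h' => ?_⟩
      have h1 := hmax s' p' h'
      have hw' := wlb hδ hwc h' 0
      simp only [Nat.zero_sub] at hw'
      have hsum' := piw_sum hδ0 hδ1 hπc hwc h'.1.1 (goodF_of_summable hδ0 h'.1.2.2) 0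
      have a1 : w (s' 0) / (1 - δ) = w 0 / (1 - δ) := by rw [h'.1.2.1]
      have a2 : w (s 0) / (1 - δ) = w 0 / (1 - δ) := by rw [hs0]
      have a3 : w (sStar 0) / (1 - δ) = w 0 / (1 - δ) := by rw [hS0]
      linarith
    have hbind_s := binding hδ hπc hwc hwa hGm hopt2
    have hbind_S := binding hδ hπc hwc hwa hGm hopt
    have hGs : GoodF δ (fun τ => π (s τ) + w (s τ)) :=
      (goodF_comp hδ0 hδ1 hπc himp.1.1).add' (goodF_comp hδ0 hδ1 hwc himp.1.1)
    have hGS : GoodF δ (fun τ => π (sStar τ) + w (sStar τ)) :=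
      (goodF_comp hδ0 hδ1 hπc himpS.1.1).add' (goodF_comp hδ0 hδ1 hwc himpS.1.1)
    have hseq : ∀ t, s t = sStar t :=
      path_unique hδ hπm himp.1.1 himpS.1.1 hs0 hS0 hGs hGS hbind_s hbind_S hSeq
    -- Step D : payments pinned down
    have hWpin : ∀ t, 1 ≤ t → WVal δ w s p t = w (s (t - 1)) / (1 - δ) := by
      intro t ht
      have h1 := himp.2.2.2.1 t
      have h2 := piw_sum hδ0 hδ1 hπc hwc himp.1.1 hpgood t
      have h3 := hbind_s t ht
      have hlb := wlb hδ hwc himp t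
      have hub : WVal δ w s p t ≤ w (s (t - 1)) / (1 - δ) := by linarith
      exact le_antisymm hub hlb
    have hpt : ∀ t : ℕ, 1 ≤ t → p t = (w (sStar (t - 1)) - w (sStar t)) / (1 - δ) := by
      intro t ht
      have hrecW := WVal_rec hδ0 hδ1 hwc himp.1.1 hpgood t
      rw [hWpin t ht, hWpin (t + 1) (by omega), Nat.add_sub_cancel] at hrecW
      rw [← hseq (t - 1), ← hseq t]
      field_simp at hrecW ⊢
      linarith
    refine ⟨hseq, himp.2.2.1 0, ?_, hpt⟩
    -- p 0 upper bound
    have hrecP := PiVal_rec hδ0 hδ1 hπc himp.1.1 hpgood 0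
    have hsum1 := piw_sum hδ0 hδ1 hπc hwc himp.1.1 hpgood 1
    have hbind1 := hbind_s 1 le_rfl
    have hW1 := hWpin 1 le_rfl
    have hPi1 : PiVal δ π s p 1 = π (s 1) / (1 - δ) := by linarith
    rw [hPi1] at hrecP
    have hPIC0' := himp.2.2.2.1 0
    rw [hrecP] at hPIC0'
    have e1 : π (s 0) = π 0 := by rw [hs0]
    have e2 : s 1 = sStar 1 := hseq 1
    rw [e1, e2] at hPIC0'
    have e3 : π 0 / (1 - δ) = π 0 / (1 - δ) := rfl
    have e4 : δ * (π (sStar 1) - π 0) / (1 - δ)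
        = π 0 + δ * (π (sStar 1) / (1 - δ)) - π 0 / (1 - δ) := by
      field_simp
      ring
    linarith
  · rintro ⟨hseq, hp0, hp0le, hpt⟩
    refine ⟨himp, ?_⟩
    rintro ⟨s', p', himp', hPi', hW', hstr⟩
    have hseq' : SVal δ π w s 0 = SVal δ π w sStar 0 :=
      Dser_congr (fun τ _ => by rw [hseq τ])
    have hsum' := piw_sum hδ0 hδ1 hπc hwc himp'.1.1 (goodF_of_summable hδ0 himp'.1.2.2) 0
    have hmax' := hmax s' p' himp'
    rcases hstr with h | h
    · linarith
    · linarith
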